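/- For any s ≤ 0 and m ≤ 0, R(D_{s,m}, C_{s,m}) = s D_{s,m} + m C_{s,m} + min over conditional pmfs P_{T|X}, pmfs Q_{T,Y} on 𝒯 × 𝒴 and pmfs Q_A on 𝒜 of F(P_{T|X}, Q_{T,Y}, Q_A); that is, the minimum of F over all three arguments equals the minimum over P_{T|X} of I(X;a(T)) + I(X;T|Y,a(T)) − s E[d(X,T(Y))] − m E[Δ(a(T))]. -/

import Mathlib

open Finset

noncomputable section

/-- A probability mass function on a finite alphabet. -/
def IsPMF {α : Type} [Fintype α] (p : α → ℝ) : Prop :=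
  (∀ a, 0 ≤ p a) ∧ ∑ a, p a = 1

/-- A conditional probability mass function. -/
def IsCondPMF {α β : Type} [Fintype α] [Fintype β] (p : α → β → ℝ) : Prop :=
  ∀ a, IsPMF (p a)

/-- A Shannon strategy: an estimate function `Y → Xh` together with an action in `A`. -/
abbrev Strat (Y Xh A : Type) : Type := (Y → Xh) × A

variable {X Y A Xh : Type} [Fintype X] [Fintype Y] [Fintype A] [Fintype Xh]
  [DecidableEq X] [DecidableEq Y] [DecidableEq A] [DecidableEq Xh]


/-- Joint pmf `P_{X,Y,T}(x,y,t) = P_X(x) P_{T|X}(t|x) P_{Y|X,A}(y|x,a(t))`. -/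
def pXYT (PX : X → ℝ) (PW : A → X → Y → ℝ) (PT : X → Strat Y Xh A → ℝ)
    (x : X) (y : Y) (t : Strat Y Xh A) : ℝ :=
  PX x * PT x t * PW t.2 x y

/-- Action marginal `P_A`. -/
def pA (PX : X → ℝ) (PT : X → Strat Y Xh A → ℝ) (a : A) : ℝ :=
  ∑ x, ∑ t, if t.2 = a then PX x * PT x t else 0

/-- Marginal `P_{X,A}`. -/
def pXA (PX : X → ℝ) (PT : X → Strat Y Xh A → ℝ) (x : X) (a : A) : ℝ :=
  ∑ t, if t.2 = a then PX x * PT x t else 0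

/-- Marginal `P_{Y,A}`. -/
def pYA (PX : X → ℝ) (PW : A → X → Y → ℝ) (PT : X → Strat Y Xh A → ℝ)
    (y : Y) (a : A) : ℝ :=
  ∑ x, ∑ t, if t.2 = a then pXYT PX PW PT x y t else 0

/-- Marginal `P_{X,Y,A}`. -/
def pXYA (PX : X → ℝ) (PW : A → X → Y → ℝ) (PT : X → Strat Y Xh A → ℝ)
    (x : X) (y : Y) (a : A) : ℝ :=
  ∑ t, if t.2 = a then pXYT PX PW PT x y t else 0

/-- Marginal `P_{Y,T}`. -/
def pYT (PX : X → ℝ) (PW : A → X → Y → ℝ) (PT : X → Strat Y Xh A → ℝ)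
    (y : Y) (t : Strat Y Xh A) : ℝ :=
  ∑ x, pXYT PX PW PT x y t

/-- Mutual information `I(X; a(T))` (base-2 logarithms). -/
def IXA (PX : X → ℝ) (PT : X → Strat Y Xh A → ℝ) : ℝ :=
  ∑ x, ∑ a, pXA PX PT x a * Real.logb 2 (pXA PX PT x a / (PX x * pA PX PT a))

/-- Conditional mutual information `I(X; T | Y, a(T))` (base-2 logarithms). -/
def IXTcondYA (PX : X → ℝ) (PW : A → X → Y → ℝ) (PT : X → Strat Y Xh A → ℝ) : ℝ :=
  ∑ x, ∑ y, ∑ t, pXYT PX PW PT x y t *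
    Real.logb 2 (pXYT PX PW PT x y t * pYA PX PW PT y t.2 /
      (pXYA PX PW PT x y t.2 * pYT PX PW PT y t))

/-- Average distortion `E[d(X, T(Y))]`. -/
def expDist (PX : X → ℝ) (PW : A → X → Y → ℝ) (dist : X → Xh → ℝ)
    (PT : X → Strat Y Xh A → ℝ) : ℝ :=
  ∑ x, ∑ y, ∑ t, pXYT PX PW PT x y t * dist x (t.1 y)

/-- Average action cost `E[Δ(a(T))]`. -/
def expCost (PX : X → ℝ) (cost : A → ℝ) (PT : X → Strat Y Xh A → ℝ) : ℝ :=
  ∑ x, ∑ t, PX x * PT x t * cost t.2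

/-- The rate-distortion-cost function in the Shannon-strategy formulation. -/
def RDC (PX : X → ℝ) (PW : A → X → Y → ℝ) (dist : X → Xh → ℝ) (cost : A → ℝ)
    (D C : ℝ) : ℝ :=
  sInf { r : ℝ | ∃ PT : X → Strat Y Xh A → ℝ, IsCondPMF PT ∧
    expDist PX PW dist PT ≤ D ∧ expCost PX cost PT ≤ C ∧
    r = IXA PX PT + IXTcondYA PX PW PT }
/-- The Lagrangian functional
`I(X;a(T)) + I(X;T|Y,a(T)) − s E[d(X,T(Y))] − m E[Δ(a(T))]`. -/
def Jfun (PX : X → ℝ) (PW : A → X → Y → ℝ) (dist : X → Xh → ℝ) (cost : A → ℝ)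
    (s m : ℝ) (PT : X → Strat Y Xh A → ℝ) : ℝ :=
  IXA PX PT + IXTcondYA PX PW PT - s * expDist PX PW dist PT - m * expCost PX cost PT

/-- The unconstrained minimum `min_{P_{T|X}} { I(X;a(T)) + I(X;T|Y,a(T)) − s E[d] − m E[Δ] }`. -/
def Jmin (PX : X → ℝ) (PW : A → X → Y → ℝ) (dist : X → Xh → ℝ) (cost : A → ℝ)
    (s m : ℝ) : ℝ :=
  sInf { r : ℝ | ∃ PT : X → Strat Y Xh A → ℝ, IsCondPMF PT ∧
    r = Jfun PX PW dist cost s m PT }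
/-- A single Kullback–Leibler summand `p log₂(p/q)` with the conventions
`0 · log(0/q) = 0` and `p log(p/0) = +∞` for `p > 0`, valued in the extended reals. -/
def klTerm (p q : ℝ) : EReal :=
  if p = 0 then 0 else if q = 0 then ⊤ else ((p * Real.logb 2 (p / q) : ℝ) : EReal)

/-- Conditional joint pmf `P_{Y,T|X}(y,t|x) = P_{T|X}(t|x) P_{Y|X,A}(y|x,a(t))`. -/
def pYTgivenX (PW : A → X → Y → ℝ) (PT : X → Strat Y Xh A → ℝ)
    (x : X) (y : Y) (t : Strat Y Xh A) : ℝ :=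
  PT x t * PW t.2 x y

/-- The Blahut–Arimoto functional
`F(P_{T|X}, Q_{T,Y}, Q_A) = D_KL(P_{Y,A}‖Q_A) − Σ P_{X,Y,T} log₂ P_{Y|X,A}`
`+ Σ_x P_X(x) D_KL(P_{Y,T|X}(·,·|x)‖Q_{T,Y}) − s E[d(X,T(Y))] − m E[Δ(a(T))]`,
valued in the extended reals (base-2 logarithms). -/
def Ffun (PX : X → ℝ) (PW : A → X → Y → ℝ) (dist : X → Xh → ℝ) (cost : A → ℝ)
    (s m : ℝ) (PT : X → Strat Y Xh A → ℝ) (QTY : Strat Y Xh A × Y → ℝ)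
    (QA : A → ℝ) : EReal :=
  (∑ y, ∑ a, klTerm (pYA PX PW PT y a) (QA a))
  + (((- ∑ x, ∑ y, ∑ t, pXYT PX PW PT x y t * Real.logb 2 (PW t.2 x y) : ℝ)) : EReal)
  + (∑ x, ((PX x : ℝ) : EReal) * ∑ t, ∑ y, klTerm (pYTgivenX PW PT x y t) (QTY (t, y)))
  + ((- s * expDist PX PW dist PT - m * expCost PX cost PT : ℝ) : EReal)

namespace RDCAux

set_option linter.unusedSectionVars false

lemma coe_sum' {ι : Type*} (s : Finset ι) (f : ι → ℝ) :
    ((∑ i ∈ s, f i : ℝ) : EReal) = ∑ i ∈ s, ((f i : ℝ) : EReal) := by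
  induction s using Finset.cons_induction with
  | empty => simp
  | cons a s ha ih => rw [Finset.sum_cons, Finset.sum_cons, EReal.coe_add, ih]

lemma sum_ne_bot' {ι : Type*} (s : Finset ι) (f : ι → EReal)
    (h : ∀ i ∈ s, f i ≠ ⊥) : ∑ i ∈ s, f i ≠ ⊥ := by
  induction s using Finset.cons_induction with
  | empty => simp
  | cons a s ha ih =>
    rw [Finset.sum_cons, Ne, EReal.add_eq_bot_iff]
    push_neg
    exact ⟨h a (Finset.mem_cons_self a s), ih fun i hi => h i (Finset.mem_cons_of_mem hi)⟩

lemma sum_eq_top' {ι : Type*} (s : Finset ι) (f : ι → EReal) (h : ∀ i ∈ s, f i ≠ ⊥)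
    {i : ι} (hi : i ∈ s) (ht : f i = ⊤) : ∑ j ∈ s, f j = ⊤ := by
  classical
  rw [← Finset.add_sum_erase s f hi, ht]
  exact EReal.top_add_of_ne_bot (sum_ne_bot' _ _ fun j hj => h j (Finset.mem_of_mem_erase hj))

lemma gibbs {ι : Type*} [Fintype ι] (p q : ι → ℝ) (hp : ∀ i, 0 ≤ p i)
    (hq : ∀ i, 0 ≤ q i) (hpq : ∀ i, 0 < p i → 0 < q i)
    (hsum : ∑ i, q i ≤ ∑ i, p i) :
    0 ≤ ∑ i, p i * Real.logb 2 (p i / q i) := by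
  have key : ∀ i, p i - q i ≤ p i * Real.log (p i / q i) := by
    intro i
    rcases eq_or_lt_of_le (hp i) with h | h
    · simp only [← h, zero_mul, zero_sub, neg_nonpos]; exact hq i
    · have hqi := hpq i h
      have h1 : Real.log (q i / p i) ≤ q i / p i - 1 :=
        Real.log_le_sub_one_of_pos (by positivity)
      have h2 : Real.log (p i / q i) = - Real.log (q i / p i) := by
        rw [← Real.log_inv, inv_div]
      rw [h2]
      have h3 : p i * (q i / p i - 1) = q i - p i := by field_simp
      nlinarith [mul_le_mul_of_nonneg_left h1 (le_of_lt h)]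
  have h4 : 0 ≤ ∑ i, p i * Real.log (p i / q i) := by
    have h6 : ∑ i, (p i - q i) ≤ ∑ i, p i * Real.log (p i / q i) :=
      Finset.sum_le_sum (fun i _ => key i)
    rw [Finset.sum_sub_distrib] at h6
    linarith
  have h5 : ∀ i, p i * Real.logb 2 (p i / q i) = (p i * Real.log (p i / q i)) / Real.log 2 := by
    intro i; rw [Real.logb]; ring
  simp only [h5, ← Finset.sum_div]
  positivity

lemma pos_of_mul3 {a b c : ℝ} (ha : 0 ≤ a) (hb : 0 ≤ b) (hc : 0 ≤ c) (h : 0 < a * b * c) :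
    0 < a ∧ 0 < b ∧ 0 < c := by
  rcases ha.lt_or_eq with h1 | h1
  swap; · rw [← h1] at h; simp at h
  rcases hb.lt_or_eq with h2 | h2
  swap; · rw [← h2] at h; simp at h
  rcases hc.lt_or_eq with h3 | h3
  swap; · rw [← h3] at h; simp at h
  exact ⟨h1, h2, h3⟩

lemma klTerm_ne_bot (p q : ℝ) : klTerm p q ≠ ⊥ := by
  unfold klTerm
  split_ifs with h1 h2
  · simp
  · simp
  · exact EReal.coe_ne_bot _

lemma klTerm_eq_coe {p q : ℝ} (h : p ≠ 0 → q ≠ 0) :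
    klTerm p q = ((p * Real.logb 2 (p / q) : ℝ) : EReal) := by
  unfold klTerm
  split_ifs with h1 h2
  · rw [h1]; norm_num
  · exact absurd h2 (h h1)
  · rfl

lemma klTerm_top {p q : ℝ} (hp : p ≠ 0) (hq : q = 0) : klTerm p q = ⊤ := by
  unfold klTerm; simp [hp, hq]

lemma coe_mul_ne_bot {c : ℝ} (hc : 0 < c) {e : EReal} (he : e ≠ ⊥) : (c : EReal) * e ≠ ⊥ := by
  induction e using EReal.rec with
  | bot => exact absurd rfl he
  | coe r => rw [← EReal.coe_mul]; exact EReal.coe_ne_bot _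
  | top => rw [EReal.coe_mul_top_of_pos hc]; simp

section Marginals

variable (PX : X → ℝ) (PW : A → X → Y → ℝ) (PT : X → Strat Y Xh A → ℝ)

lemma pXYT_eq (x : X) (y : Y) (t : Strat Y Xh A) :
    pXYT PX PW PT x y t = PX x * pYTgivenX PW PT x y t := by
  unfold pXYT pYTgivenX; ring

lemma sum_pXYT_y (hPW : ∀ a x, IsPMF (PW a x)) (x : X) (t : Strat Y Xh A) :
    ∑ y, pXYT PX PW PT x y t = PX x * PT x t := by
  unfold pXYT
  rw [← Finset.mul_sum, (hPW t.2 x).2, mul_one]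

lemma pXYA_eq (x : X) (y : Y) (a : A) :
    pXYA PX PW PT x y a = PW a x y * pXA PX PT x a := by
  unfold pXYA pXA pXYT
  rw [Finset.mul_sum]
  refine Finset.sum_congr rfl fun t _ => ?_
  split_ifs with h
  · rw [h]; ring
  · rw [mul_zero]

lemma pA_eq (a : A) : pA PX PT a = ∑ x, pXA PX PT x a := rfl

lemma pYA_eq (y : Y) (a : A) : pYA PX PW PT y a = ∑ x, pXYA PX PW PT x y a := rfl

lemma sum_pA (hPX : IsPMF PX) (hPT : IsCondPMF PT) : ∑ a, pA PX PT a = 1 := by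
  have h1 : ∀ x, ∑ a, ∑ t, (if t.2 = a then PX x * PT x t else 0) = PX x := by
    intro x
    rw [Finset.sum_comm]
    simp only [Finset.sum_ite_eq, Finset.mem_univ, if_true]
    rw [← Finset.mul_sum, (hPT x).2, mul_one]
  unfold pA
  rw [Finset.sum_comm]
  calc ∑ x, ∑ a, ∑ t, (if t.2 = a then PX x * PT x t else 0) = ∑ x, PX x :=
        Finset.sum_congr rfl fun x _ => h1 x
    _ = 1 := hPX.2

lemma sum_pYA_y (hPW : ∀ a x, IsPMF (PW a x)) (a : A) :
    ∑ y, pYA PX PW PT y a = pA PX PT a := by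
  unfold pYA pA
  rw [Finset.sum_comm]
  refine Finset.sum_congr rfl fun x _ => ?_
  rw [Finset.sum_comm]
  refine Finset.sum_congr rfl fun t _ => ?_
  by_cases h : t.2 = a
  · simp only [h, if_true]
    exact sum_pXYT_y PX PW PT hPW x t
  · simp [h]

lemma pYT_eq (y : Y) (t : Strat Y Xh A) :
    pYT PX PW PT y t = ∑ x, PX x * pYTgivenX PW PT x y t :=
  Finset.sum_congr rfl fun x _ => pXYT_eq PX PW PT x y t

lemma sum_pYT_one (hPX : IsPMF PX) (hPW : ∀ a x, IsPMF (PW a x)) (hPT : IsCondPMF PT) :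
    ∑ p : Strat Y Xh A × Y, pYT PX PW PT p.2 p.1 = 1 := by
  rw [Fintype.sum_prod_type]
  unfold pYT
  calc ∑ t : Strat Y Xh A, ∑ y, ∑ x, pXYT PX PW PT x y t
      = ∑ t : Strat Y Xh A, ∑ x, ∑ y, pXYT PX PW PT x y t :=
        Finset.sum_congr rfl fun t _ => Finset.sum_comm
    _ = ∑ x, ∑ t : Strat Y Xh A, ∑ y, pXYT PX PW PT x y t := Finset.sum_comm
    _ = ∑ x, ∑ t : Strat Y Xh A, PX x * PT x t := by
        refine Finset.sum_congr rfl fun x _ => Finset.sum_congr rfl fun t _ => ?_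
        exact sum_pXYT_y PX PW PT hPW x t
    _ = ∑ x, PX x := by
        refine Finset.sum_congr rfl fun x _ => ?_
        rw [← Finset.mul_sum, (hPT x).2, mul_one]
    _ = 1 := hPX.2

section Nonneg

variable (hPXnn : ∀ x, 0 ≤ PX x) (hPWnn : ∀ a x y, 0 ≤ PW a x y)
  (hPTnn : ∀ x t, 0 ≤ PT x t)

include hPXnn hPWnn hPTnn in
lemma pXYT_nonneg (x : X) (y : Y) (t : Strat Y Xh A) : 0 ≤ pXYT PX PW PT x y t := by
  unfold pXYT
  exact mul_nonneg (mul_nonneg (hPXnn x) (hPTnn x t)) (hPWnn t.2 x y)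

include hPWnn hPTnn in
lemma pYTgivenX_nonneg (x : X) (y : Y) (t : Strat Y Xh A) : 0 ≤ pYTgivenX PW PT x y t :=
  mul_nonneg (hPTnn x t) (hPWnn t.2 x y)

include hPXnn hPTnn in
lemma pXA_nonneg (x : X) (a : A) : 0 ≤ pXA PX PT x a :=
  Finset.sum_nonneg fun t _ => by
    split_ifs
    · exact mul_nonneg (hPXnn x) (hPTnn x t)
    · exact le_refl 0

include hPXnn hPTnn in
lemma pA_nonneg (a : A) : 0 ≤ pA PX PT a :=
  Finset.sum_nonneg fun x _ => pXA_nonneg PX PT hPXnn hPTnn x a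

include hPXnn hPWnn hPTnn in
lemma pXYA_nonneg (x : X) (y : Y) (a : A) : 0 ≤ pXYA PX PW PT x y a :=
  Finset.sum_nonneg fun t _ => by
    split_ifs
    · exact pXYT_nonneg PX PW PT hPXnn hPWnn hPTnn x y t
    · exact le_refl 0

include hPXnn hPWnn hPTnn in
lemma pYA_nonneg (y : Y) (a : A) : 0 ≤ pYA PX PW PT y a :=
  Finset.sum_nonneg fun x _ => pXYA_nonneg PX PW PT hPXnn hPWnn hPTnn x y a

include hPXnn hPWnn hPTnn in
lemma pYT_nonneg (y : Y) (t : Strat Y Xh A) : 0 ≤ pYT PX PW PT y t :=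
  Finset.sum_nonneg fun x _ => pXYT_nonneg PX PW PT hPXnn hPWnn hPTnn x y t

include hPXnn hPTnn in
lemma le_pXA (x : X) (t : Strat Y Xh A) : PX x * PT x t ≤ pXA PX PT x t.2 := by
  have h : PX x * PT x t = if t.2 = t.2 then PX x * PT x t else 0 := by simp
  rw [h]
  exact Finset.single_le_sum (f := fun t' => if t'.2 = t.2 then PX x * PT x t' else 0)
    (fun t' _ => by
      split_ifs
      · exact mul_nonneg (hPXnn x) (hPTnn x t')
      · exact le_refl 0) (Finset.mem_univ t)

include hPXnn hPTnn in
lemma le_pA (x : X) (a : A) : pXA PX PT x a ≤ pA PX PT a :=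
  Finset.single_le_sum (f := fun x' => pXA PX PT x' a)
    (fun x' _ => pXA_nonneg PX PT hPXnn hPTnn x' a) (Finset.mem_univ x)

include hPXnn hPWnn hPTnn in
lemma le_pXYA (x : X) (y : Y) (t : Strat Y Xh A) :
    pXYT PX PW PT x y t ≤ pXYA PX PW PT x y t.2 := by
  have h : pXYT PX PW PT x y t = if t.2 = t.2 then pXYT PX PW PT x y t else 0 := by simp
  rw [h]
  exact Finset.single_le_sum (f := fun t' => if t'.2 = t.2 then pXYT PX PW PT x y t' else 0)
    (fun t' _ => by
      split_ifs
      · exact pXYT_nonneg PX PW PT hPXnn hPWnn hPTnn x y t'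
      · exact le_refl 0) (Finset.mem_univ t)

include hPXnn hPWnn hPTnn in
lemma le_pYA (x : X) (y : Y) (t : Strat Y Xh A) :
    pXYT PX PW PT x y t ≤ pYA PX PW PT y t.2 :=
  le_trans (le_pXYA PX PW PT hPXnn hPWnn hPTnn x y t)
    (Finset.single_le_sum (f := fun x' => pXYA PX PW PT x' y t.2)
      (fun x' _ => pXYA_nonneg PX PW PT hPXnn hPWnn hPTnn x' y t.2) (Finset.mem_univ x))

include hPXnn hPWnn hPTnn in
lemma le_pYT (x : X) (y : Y) (t : Strat Y Xh A) :
    pXYT PX PW PT x y t ≤ pYT PX PW PT y t :=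
  Finset.single_le_sum (f := fun x' => pXYT PX PW PT x' y t)
    (fun x' _ => pXYT_nonneg PX PW PT hPXnn hPWnn hPTnn x' y t) (Finset.mem_univ x)

include hPXnn hPWnn hPTnn in
lemma pYA_le_pA (hPW' : ∀ a x, IsPMF (PW a x)) (y : Y) (a : A) :
    pYA PX PW PT y a ≤ pA PX PT a := by
  rw [← sum_pYA_y PX PW PT hPW' a]
  exact Finset.single_le_sum (f := fun y' => pYA PX PW PT y' a)
    (fun y' _ => pYA_nonneg PX PW PT hPXnn hPWnn hPTnn y' a) (Finset.mem_univ y)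

end Nonneg

lemma sum_pYA_mul (f : Y → A → ℝ) :
    ∑ y, ∑ a, pYA PX PW PT y a * f y a = ∑ x, ∑ y, ∑ t, pXYT PX PW PT x y t * f y t.2 := by
  have h : ∀ y, ∑ a, ∑ x, ∑ t, (if t.2 = a then pXYT PX PW PT x y t * f y a else 0)
      = ∑ x, ∑ t, pXYT PX PW PT x y t * f y t.2 := by
    intro y
    rw [Finset.sum_comm]
    refine Finset.sum_congr rfl fun x _ => ?_
    rw [Finset.sum_comm]
    refine Finset.sum_congr rfl fun t _ => ?_
    rw [Finset.sum_ite_eq]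
    simp
  calc ∑ y, ∑ a, pYA PX PW PT y a * f y a
      = ∑ y, ∑ x, ∑ t, pXYT PX PW PT x y t * f y t.2 := by
        unfold pYA
        simp only [Finset.sum_mul, ite_mul, zero_mul]
        exact Finset.sum_congr rfl fun y _ => h y
    _ = ∑ x, ∑ y, ∑ t, pXYT PX PW PT x y t * f y t.2 := Finset.sum_comm

lemma sum_pXA_mul (hPW : ∀ a x, IsPMF (PW a x)) (f : X → A → ℝ) (x : X) :
    ∑ a, pXA PX PT x a * f x a = ∑ y, ∑ t, pXYT PX PW PT x y t * f x t.2 := by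
  calc ∑ a, pXA PX PT x a * f x a
      = ∑ t : Strat Y Xh A, PX x * PT x t * f x t.2 := by
        unfold pXA
        simp only [Finset.sum_mul, ite_mul, zero_mul]
        rw [Finset.sum_comm]
        refine Finset.sum_congr rfl fun t _ => ?_
        rw [Finset.sum_ite_eq]
        simp
    _ = ∑ t : Strat Y Xh A, ∑ y, pXYT PX PW PT x y t * f x t.2 := by
        refine Finset.sum_congr rfl fun t _ => ?_
        rw [← Finset.sum_mul, sum_pXYT_y PX PW PT hPW]
    _ = ∑ y, ∑ t, pXYT PX PW PT x y t * f x t.2 := Finset.sum_comm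

end Marginals

section Core

variable (PX : X → ℝ) (PW : A → X → Y → ℝ) (dist : X → Xh → ℝ) (cost : A → ℝ)
  (s m : ℝ) (PT : X → Strat Y Xh A → ℝ)

/-- Real-valued version of `Ffun` (finite everywhere by convention `0·log(0/q)=0`). -/
def Fr (QTY : Strat Y Xh A × Y → ℝ) (QA : A → ℝ) : ℝ :=
  (∑ y, ∑ a, pYA PX PW PT y a * Real.logb 2 (pYA PX PW PT y a / QA a))
  + (- ∑ x, ∑ y, ∑ t, pXYT PX PW PT x y t * Real.logb 2 (PW t.2 x y))
  + (∑ x, PX x * ∑ t, ∑ y, pYTgivenX PW PT x y t *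
      Real.logb 2 (pYTgivenX PW PT x y t / QTY (t, y)))
  + (- s * expDist PX PW dist PT - m * expCost PX cost PT)

lemma sums_identity (hPX : ∀ x, 0 ≤ PX x) (hPW : ∀ a x, IsPMF (PW a x))
    (hPT : IsCondPMF PT) :
    (∑ y, ∑ a, pYA PX PW PT y a * Real.logb 2 (pYA PX PW PT y a / pA PX PT a))
      + (- ∑ x, ∑ y, ∑ t, pXYT PX PW PT x y t * Real.logb 2 (PW t.2 x y))
      + (∑ x, PX x * ∑ t, ∑ y, pYTgivenX PW PT x y t *
          Real.logb 2 (pYTgivenX PW PT x y t / pYT PX PW PT y t))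
      = IXA PX PT + IXTcondYA PX PW PT := by
  have hPWnn : ∀ a x y, 0 ≤ PW a x y := fun a x y => (hPW a x).1 y
  have hPTnn : ∀ x t, 0 ≤ PT x t := fun x t => (hPT x).1 t
  rw [sum_pYA_mul PX PW PT (fun y a => Real.logb 2 (pYA PX PW PT y a / pA PX PT a))]
  have hS3 : ∑ x, PX x * ∑ t, ∑ y, pYTgivenX PW PT x y t *
        Real.logb 2 (pYTgivenX PW PT x y t / pYT PX PW PT y t)
      = ∑ x, ∑ y, ∑ t, pXYT PX PW PT x y t *
        Real.logb 2 (pYTgivenX PW PT x y t / pYT PX PW PT y t) := by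
    refine Finset.sum_congr rfl fun x _ => ?_
    calc PX x * ∑ t, ∑ y, pYTgivenX PW PT x y t *
          Real.logb 2 (pYTgivenX PW PT x y t / pYT PX PW PT y t)
        = ∑ t, ∑ y, pXYT PX PW PT x y t *
            Real.logb 2 (pYTgivenX PW PT x y t / pYT PX PW PT y t) := by
          rw [Finset.mul_sum]
          refine Finset.sum_congr rfl fun t _ => ?_
          rw [Finset.mul_sum]
          refine Finset.sum_congr rfl fun y _ => ?_
          rw [pXYT_eq PX PW PT x y t]; ring
      _ = ∑ y, ∑ t, pXYT PX PW PT x y t *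
            Real.logb 2 (pYTgivenX PW PT x y t / pYT PX PW PT y t) := Finset.sum_comm
  rw [hS3]
  have hIXA : IXA PX PT = ∑ x, ∑ y, ∑ t, pXYT PX PW PT x y t *
      Real.logb 2 (pXA PX PT x t.2 / (PX x * pA PX PT t.2)) := by
    unfold IXA
    exact Finset.sum_congr rfl fun x _ =>
      sum_pXA_mul PX PW PT hPW (fun x a => Real.logb 2 (pXA PX PT x a / (PX x * pA PX PT a))) x
  rw [hIXA]
  unfold IXTcondYA
  simp only [← Finset.sum_neg_distrib, ← Finset.sum_add_distrib]
  refine Finset.sum_congr rfl fun x _ => Finset.sum_congr rfl fun y _ =>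
    Finset.sum_congr rfl fun t _ => ?_
  by_cases hz : pXYT PX PW PT x y t = 0
  · simp [hz]
  · have hpos : 0 < pXYT PX PW PT x y t :=
      lt_of_le_of_ne (pXYT_nonneg PX PW PT hPX hPWnn hPTnn x y t) (Ne.symm hz)
    have h3 : 0 < PX x * PT x t * PW t.2 x y := hpos
    obtain ⟨hx, ht, hw⟩ := pos_of_mul3 (hPX x) (hPTnn x t) (hPWnn t.2 x y) h3
    have hgiven : 0 < pYTgivenX PW PT x y t := mul_pos ht hw
    have hpXA : 0 < pXA PX PT x t.2 :=
      lt_of_lt_of_le (mul_pos hx ht) (le_pXA PX PT hPX hPTnn x t)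
    have hpA : 0 < pA PX PT t.2 := lt_of_lt_of_le hpXA (le_pA PX PT hPX hPTnn x t.2)
    have hpYA : 0 < pYA PX PW PT y t.2 :=
      lt_of_lt_of_le hpos (le_pYA PX PW PT hPX hPWnn hPTnn x y t)
    have hpYT : 0 < pYT PX PW PT y t :=
      lt_of_lt_of_le hpos (le_pYT PX PW PT hPX hPWnn hPTnn x y t)
    have hpXYA : 0 < pXYA PX PW PT x y t.2 := by
      rw [pXYA_eq]; exact mul_pos hw hpXA
    have e5 : Real.logb 2 (pXYT PX PW PT x y t)
        = Real.logb 2 (PX x) + Real.logb 2 (pYTgivenX PW PT x y t) := by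
      rw [pXYT_eq PX PW PT x y t, Real.logb_mul hx.ne' hgiven.ne']
    have e6 : Real.logb 2 (pXYA PX PW PT x y t.2)
        = Real.logb 2 (PW t.2 x y) + Real.logb 2 (pXA PX PT x t.2) := by
      rw [pXYA_eq, Real.logb_mul hw.ne' hpXA.ne']
    rw [Real.logb_div (mul_ne_zero hz hpYA.ne') (mul_ne_zero hpXYA.ne' hpYT.ne'),
      Real.logb_mul hz hpYA.ne', Real.logb_mul hpXYA.ne' hpYT.ne',
      Real.logb_div hpYA.ne' hpA.ne', Real.logb_div hgiven.ne' hpYT.ne',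
      Real.logb_div hpXA.ne' (mul_ne_zero hx.ne' hpA.ne'), Real.logb_mul hx.ne' hpA.ne',
      e5, e6]
    ring

lemma Fr_opt_eq_Jfun (hPX : ∀ x, 0 ≤ PX x) (hPW : ∀ a x, IsPMF (PW a x))
    (hPT : IsCondPMF PT) :
    Fr PX PW dist cost s m PT (fun p => pYT PX PW PT p.2 p.1) (pA PX PT)
      = Jfun PX PW dist cost s m PT := by
  unfold Fr Jfun
  rw [← sums_identity PX PW PT hPX hPW hPT]
  ring

lemma Fr_opt_le (hPX : IsPMF PX) (hPXpos : ∀ x, 0 < PX x) (hPW : ∀ a x, IsPMF (PW a x))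
    (hPT : IsCondPMF PT) (QTY : Strat Y Xh A × Y → ℝ) (QA : A → ℝ)
    (hQTY : IsPMF QTY) (hQA : IsPMF QA)
    (hgood1 : ∀ y a, pYA PX PW PT y a ≠ 0 → QA a ≠ 0)
    (hgood2 : ∀ x y t, pYTgivenX PW PT x y t ≠ 0 → QTY (t, y) ≠ 0) :
    Fr PX PW dist cost s m PT (fun p => pYT PX PW PT p.2 p.1) (pA PX PT)
      ≤ Fr PX PW dist cost s m PT QTY QA := by
  have hPXnn : ∀ x, 0 ≤ PX x := fun x => (hPXpos x).le
  have hPWnn : ∀ a x y, 0 ≤ PW a x y := fun a x y => (hPW a x).1 y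
  have hPTnn : ∀ x t, 0 ≤ PT x t := fun x t => (hPT x).1 t
  -- Part A : the Q_A term
  have hA : ∀ y a, pYA PX PW PT y a * Real.logb 2 (pYA PX PW PT y a / QA a)
      = pYA PX PW PT y a * Real.logb 2 (pYA PX PW PT y a / pA PX PT a)
        + pYA PX PW PT y a * Real.logb 2 (pA PX PT a / QA a) := by
    intro y a
    by_cases h : pYA PX PW PT y a = 0
    · simp [h]
    · have hpos : 0 < pYA PX PW PT y a :=
        lt_of_le_of_ne (pYA_nonneg PX PW PT hPXnn hPWnn hPTnn y a) (Ne.symm h)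
      have hpA : 0 < pA PX PT a :=
        lt_of_lt_of_le hpos (pYA_le_pA PX PW PT hPXnn hPWnn hPTnn hPW y a)
      have hQ : QA a ≠ 0 := hgood1 y a h
      rw [Real.logb_div h hQ, Real.logb_div h hpA.ne', Real.logb_div hpA.ne' hQ]
      ring
  have hKLA : (∑ y, ∑ a, pYA PX PW PT y a * Real.logb 2 (pYA PX PW PT y a / QA a))
      = (∑ y, ∑ a, pYA PX PW PT y a * Real.logb 2 (pYA PX PW PT y a / pA PX PT a))
        + ∑ a, pA PX PT a * Real.logb 2 (pA PX PT a / QA a) := by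
    have h1 : ∑ y, ∑ a, pYA PX PW PT y a * Real.logb 2 (pA PX PT a / QA a)
        = ∑ a, pA PX PT a * Real.logb 2 (pA PX PT a / QA a) := by
      rw [Finset.sum_comm]
      refine Finset.sum_congr rfl fun a _ => ?_
      rw [← Finset.sum_mul, sum_pYA_y PX PW PT hPW a]
    calc ∑ y, ∑ a, pYA PX PW PT y a * Real.logb 2 (pYA PX PW PT y a / QA a)
        = ∑ y, ∑ a, (pYA PX PW PT y a * Real.logb 2 (pYA PX PW PT y a / pA PX PT a)
            + pYA PX PW PT y a * Real.logb 2 (pA PX PT a / QA a)) := by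
          exact Finset.sum_congr rfl fun y _ => Finset.sum_congr rfl fun a _ => hA y a
      _ = (∑ y, ∑ a, pYA PX PW PT y a * Real.logb 2 (pYA PX PW PT y a / pA PX PT a))
            + ∑ y, ∑ a, pYA PX PW PT y a * Real.logb 2 (pA PX PT a / QA a) := by
          simp only [Finset.sum_add_distrib]
      _ = _ := by rw [h1]
  have hGibbsA : 0 ≤ ∑ a, pA PX PT a * Real.logb 2 (pA PX PT a / QA a) := by
    refine gibbs (pA PX PT) QA (fun a => pA_nonneg PX PT hPXnn hPTnn a) hQA.1 ?_ ?_
    · intro a ha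
      have hex : ∃ y, pYA PX PW PT y a ≠ 0 := by
        by_contra hc
        push_neg at hc
        rw [← sum_pYA_y PX PW PT hPW a] at ha
        simp only [hc, Finset.sum_const_zero] at ha
        exact lt_irrefl 0 ha
      obtain ⟨y, hy⟩ := hex
      exact lt_of_le_of_ne (hQA.1 a) (Ne.symm (hgood1 y a hy))
    · rw [hQA.2, sum_pA PX PT hPX hPT]
  -- Part B : the Q_TY term
  have hB : ∀ x t y, pYTgivenX PW PT x y t *
        Real.logb 2 (pYTgivenX PW PT x y t / QTY (t, y))
      = pYTgivenX PW PT x y t * Real.logb 2 (pYTgivenX PW PT x y t / pYT PX PW PT y t)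
        + pYTgivenX PW PT x y t * Real.logb 2 (pYT PX PW PT y t / QTY (t, y)) := by
    intro x t y
    by_cases h : pYTgivenX PW PT x y t = 0
    · simp [h]
    · have hpos : 0 < pYTgivenX PW PT x y t :=
        lt_of_le_of_ne (pYTgivenX_nonneg PW PT hPWnn hPTnn x y t) (Ne.symm h)
      have hxyt : 0 < pXYT PX PW PT x y t := by
        rw [pXYT_eq PX PW PT x y t]; exact mul_pos (hPXpos x) hpos
      have hpYT : 0 < pYT PX PW PT y t :=
        lt_of_lt_of_le hxyt (le_pYT PX PW PT hPXnn hPWnn hPTnn x y t)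
      have hQ : QTY (t, y) ≠ 0 := hgood2 x y t h
      rw [Real.logb_div h hQ, Real.logb_div h hpYT.ne', Real.logb_div hpYT.ne' hQ]
      ring
  have hKLB : (∑ x, PX x * ∑ t, ∑ y, pYTgivenX PW PT x y t *
        Real.logb 2 (pYTgivenX PW PT x y t / QTY (t, y)))
      = (∑ x, PX x * ∑ t, ∑ y, pYTgivenX PW PT x y t *
          Real.logb 2 (pYTgivenX PW PT x y t / pYT PX PW PT y t))
        + ∑ t, ∑ y, pYT PX PW PT y t * Real.logb 2 (pYT PX PW PT y t / QTY (t, y)) := by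
    have h1 : ∑ x, PX x * ∑ t, ∑ y, pYTgivenX PW PT x y t *
          Real.logb 2 (pYT PX PW PT y t / QTY (t, y))
        = ∑ t, ∑ y, pYT PX PW PT y t * Real.logb 2 (pYT PX PW PT y t / QTY (t, y)) := by
      simp only [Finset.mul_sum]
      rw [Finset.sum_comm]
      refine Finset.sum_congr rfl fun t _ => ?_
      rw [Finset.sum_comm]
      refine Finset.sum_congr rfl fun y _ => ?_
      simp only [← mul_assoc]
      rw [← Finset.sum_mul]
      congr 1
      rw [pYT_eq PX PW PT y t]
    calc ∑ x, PX x * ∑ t, ∑ y, pYTgivenX PW PT x y t *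
          Real.logb 2 (pYTgivenX PW PT x y t / QTY (t, y))
        = ∑ x, (PX x * ∑ t, ∑ y, pYTgivenX PW PT x y t *
              Real.logb 2 (pYTgivenX PW PT x y t / pYT PX PW PT y t)
            + PX x * ∑ t, ∑ y, pYTgivenX PW PT x y t *
              Real.logb 2 (pYT PX PW PT y t / QTY (t, y))) := by
          refine Finset.sum_congr rfl fun x _ => ?_
          rw [← mul_add, ← Finset.sum_add_distrib]
          congr 1
          refine Finset.sum_congr rfl fun t _ => ?_
          rw [← Finset.sum_add_distrib]
          exact Finset.sum_congr rfl fun y _ => hB x t y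
      _ = (∑ x, PX x * ∑ t, ∑ y, pYTgivenX PW PT x y t *
              Real.logb 2 (pYTgivenX PW PT x y t / pYT PX PW PT y t))
            + ∑ x, PX x * ∑ t, ∑ y, pYTgivenX PW PT x y t *
              Real.logb 2 (pYT PX PW PT y t / QTY (t, y)) := by
          simp only [Finset.sum_add_distrib]
      _ = _ := by rw [h1]
  have hGibbsB : 0 ≤ ∑ t, ∑ y, pYT PX PW PT y t *
      Real.logb 2 (pYT PX PW PT y t / QTY (t, y)) := by
    have := gibbs (fun p : Strat Y Xh A × Y => pYT PX PW PT p.2 p.1) QTY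
      (fun p => pYT_nonneg PX PW PT hPXnn hPWnn hPTnn p.2 p.1) hQTY.1 ?_ ?_
    · rw [Fintype.sum_prod_type] at this
      exact this
    · intro p hp
      change 0 < pYT PX PW PT p.2 p.1 at hp
      have hex : ∃ x, pXYT PX PW PT x p.2 p.1 ≠ 0 := by
        by_contra hc
        push_neg at hc
        have : pYT PX PW PT p.2 p.1 = 0 := by
          unfold pYT
          simp only [hc, Finset.sum_const_zero]
        rw [this] at hp
        exact lt_irrefl 0 hp
      obtain ⟨x, hx⟩ := hex
      have hg : pYTgivenX PW PT x p.2 p.1 ≠ 0 := by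
        intro h0
        rw [pXYT_eq PX PW PT x p.2 p.1, h0, mul_zero] at hx
        exact hx rfl
      have := hgood2 x p.2 p.1 hg
      exact lt_of_le_of_ne (hQTY.1 p) (Ne.symm (by simpa using this))
    · rw [hQTY.2, sum_pYT_one PX PW PT hPX hPW hPT]
  unfold Fr
  rw [hKLA, hKLB]
  linarith

lemma Ffun_eq_coe_Fr (QTY : Strat Y Xh A × Y → ℝ) (QA : A → ℝ)
    (hgood1 : ∀ y a, pYA PX PW PT y a ≠ 0 → QA a ≠ 0)
    (hgood2 : ∀ x y t, pYTgivenX PW PT x y t ≠ 0 → QTY (t, y) ≠ 0) :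
    Ffun PX PW dist cost s m PT QTY QA
      = ((Fr PX PW dist cost s m PT QTY QA : ℝ) : EReal) := by
  have h1 : (∑ y, ∑ a, klTerm (pYA PX PW PT y a) (QA a))
      = ((∑ y, ∑ a, pYA PX PW PT y a *
          Real.logb 2 (pYA PX PW PT y a / QA a) : ℝ) : EReal) := by
    rw [coe_sum']
    refine Finset.sum_congr rfl fun y _ => ?_
    rw [coe_sum']
    exact Finset.sum_congr rfl fun a _ => klTerm_eq_coe (hgood1 y a)
  have h3 : (∑ x, ((PX x : ℝ) : EReal) * ∑ t, ∑ y,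
        klTerm (pYTgivenX PW PT x y t) (QTY (t, y)))
      = ((∑ x, PX x * ∑ t, ∑ y, pYTgivenX PW PT x y t *
          Real.logb 2 (pYTgivenX PW PT x y t / QTY (t, y)) : ℝ) : EReal) := by
    rw [coe_sum']
    refine Finset.sum_congr rfl fun x _ => ?_
    rw [EReal.coe_mul]
    congr 1
    rw [coe_sum']
    refine Finset.sum_congr rfl fun t _ => ?_
    rw [coe_sum']
    exact Finset.sum_congr rfl fun y _ => klTerm_eq_coe (hgood2 x y t)
  unfold Ffun Fr
  rw [h1, h3, ← EReal.coe_add, ← EReal.coe_add, ← EReal.coe_add]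

lemma Ffun_eq_top (hPXpos : ∀ x, 0 < PX x) (QTY : Strat Y Xh A × Y → ℝ) (QA : A → ℝ)
    (hbad : (∃ y a, pYA PX PW PT y a ≠ 0 ∧ QA a = 0) ∨
      ∃ x y t, pYTgivenX PW PT x y t ≠ 0 ∧ QTY (t, y) = 0) :
    Ffun PX PW dist cost s m PT QTY QA = ⊤ := by
  have hT1nb : (∑ y, ∑ a, klTerm (pYA PX PW PT y a) (QA a)) ≠ ⊥ :=
    sum_ne_bot' _ _ fun y _ => sum_ne_bot' _ _ fun a _ => klTerm_ne_bot _ _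
  have hinnb : ∀ x, (∑ t, ∑ y, klTerm (pYTgivenX PW PT x y t) (QTY (t, y))) ≠ ⊥ :=
    fun x => sum_ne_bot' _ _ fun t _ => sum_ne_bot' _ _ fun y _ => klTerm_ne_bot _ _
  have hT3nb : (∑ x, ((PX x : ℝ) : EReal) * ∑ t, ∑ y,
      klTerm (pYTgivenX PW PT x y t) (QTY (t, y))) ≠ ⊥ :=
    sum_ne_bot' _ _ fun x _ => coe_mul_ne_bot (hPXpos x) (hinnb x)
  unfold Ffun
  rcases hbad with ⟨y, a, hp, hq⟩ | ⟨x, y, t, hp, hq⟩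
  · have hT1 : (∑ y, ∑ a, klTerm (pYA PX PW PT y a) (QA a)) = ⊤ :=
      sum_eq_top' _ _ (fun y' _ => sum_ne_bot' _ _ fun a' _ => klTerm_ne_bot _ _)
        (Finset.mem_univ y)
        (sum_eq_top' _ _ (fun a' _ => klTerm_ne_bot _ _) (Finset.mem_univ a)
          (klTerm_top hp hq))
    rw [hT1, EReal.top_add_of_ne_bot (EReal.coe_ne_bot _),
      EReal.top_add_of_ne_bot hT3nb, EReal.top_add_of_ne_bot (EReal.coe_ne_bot _)]
  · have hT3 : (∑ x, ((PX x : ℝ) : EReal) * ∑ t, ∑ y,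
        klTerm (pYTgivenX PW PT x y t) (QTY (t, y))) = ⊤ := by
      refine sum_eq_top' _ _ (fun x' _ => coe_mul_ne_bot (hPXpos x') (hinnb x'))
        (Finset.mem_univ x) ?_
      have hin : (∑ t, ∑ y, klTerm (pYTgivenX PW PT x y t) (QTY (t, y))) = ⊤ :=
        sum_eq_top' _ _ (fun t' _ => sum_ne_bot' _ _ fun y' _ => klTerm_ne_bot _ _)
          (Finset.mem_univ t)
          (sum_eq_top' _ _ (fun y' _ => klTerm_ne_bot _ _) (Finset.mem_univ y)
            (klTerm_top hp hq))
      rw [hin]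
      exact EReal.coe_mul_top_of_pos (hPXpos x)
    have h12 : (∑ y, ∑ a, klTerm (pYA PX PW PT y a) (QA a))
        + ((- ∑ x, ∑ y, ∑ t, pXYT PX PW PT x y t *
            Real.logb 2 (PW t.2 x y) : ℝ) : EReal) ≠ ⊥ := by
      rw [Ne, EReal.add_eq_bot_iff]
      push_neg
      exact ⟨hT1nb, EReal.coe_ne_bot _⟩
    rw [hT3, EReal.add_top_of_ne_bot h12, EReal.top_add_of_ne_bot (EReal.coe_ne_bot _)]

lemma pA_pmf (hPX : IsPMF PX) (hPT : IsCondPMF PT) : IsPMF (pA PX PT) :=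
  ⟨fun a => pA_nonneg PX PT (fun x => hPX.1 x) (fun x t => (hPT x).1 t) a,
    sum_pA PX PT hPX hPT⟩

lemma pYTopt_pmf (hPX : IsPMF PX) (hPW : ∀ a x, IsPMF (PW a x)) (hPT : IsCondPMF PT) :
    IsPMF (fun p : Strat Y Xh A × Y => pYT PX PW PT p.2 p.1) :=
  ⟨fun p => pYT_nonneg PX PW PT (fun x => hPX.1 x)
      (fun a x y => (hPW a x).1 y) (fun x t => (hPT x).1 t) p.2 p.1,
    sum_pYT_one PX PW PT hPX hPW hPT⟩

lemma Jfun_le_Ffun (hPX : IsPMF PX) (hPXpos : ∀ x, 0 < PX x)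
    (hPW : ∀ a x, IsPMF (PW a x)) (hPT : IsCondPMF PT)
    (QTY : Strat Y Xh A × Y → ℝ) (QA : A → ℝ) (hQTY : IsPMF QTY) (hQA : IsPMF QA) :
    ((Jfun PX PW dist cost s m PT : ℝ) : EReal)
      ≤ Ffun PX PW dist cost s m PT QTY QA := by
  by_cases hgood : (∀ y a, pYA PX PW PT y a ≠ 0 → QA a ≠ 0)
      ∧ (∀ x y t, pYTgivenX PW PT x y t ≠ 0 → QTY (t, y) ≠ 0)
  · rw [Ffun_eq_coe_Fr PX PW dist cost s m PT QTY QA hgood.1 hgood.2,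
      EReal.coe_le_coe_iff,
      ← Fr_opt_eq_Jfun PX PW dist cost s m PT (fun x => hPX.1 x) hPW hPT]
    exact Fr_opt_le PX PW dist cost s m PT hPX hPXpos hPW hPT QTY QA hQTY hQA
      hgood.1 hgood.2
  · rw [Ffun_eq_top PX PW dist cost s m PT hPXpos QTY QA ?_]
    · exact le_top
    · rcases not_and_or.mp hgood with h | h
      · left
        push_neg at h
        obtain ⟨y, a, h1, h2⟩ := h
        exact ⟨y, a, h1, h2⟩
      · right
        push_neg at h
        obtain ⟨x, y, t, h1, h2⟩ := h
        exact ⟨x, y, t, h1, h2⟩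

lemma Ffun_opt_eq (hPX : IsPMF PX) (hPXpos : ∀ x, 0 < PX x)
    (hPW : ∀ a x, IsPMF (PW a x)) (hPT : IsCondPMF PT) :
    Ffun PX PW dist cost s m PT (fun p => pYT PX PW PT p.2 p.1) (pA PX PT)
      = ((Jfun PX PW dist cost s m PT : ℝ) : EReal) := by
  have hPXnn : ∀ x, 0 ≤ PX x := fun x => hPX.1 x
  have hPWnn : ∀ a x y, 0 ≤ PW a x y := fun a x y => (hPW a x).1 y
  have hPTnn : ∀ x t, 0 ≤ PT x t := fun x t => (hPT x).1 t
  have hg1 : ∀ y a, pYA PX PW PT y a ≠ 0 → pA PX PT a ≠ 0 := by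
    intro y a h
    have hpos : 0 < pYA PX PW PT y a :=
      lt_of_le_of_ne (pYA_nonneg PX PW PT hPXnn hPWnn hPTnn y a) (Ne.symm h)
    exact (lt_of_lt_of_le hpos (pYA_le_pA PX PW PT hPXnn hPWnn hPTnn hPW y a)).ne'
  have hg2 : ∀ x y t, pYTgivenX PW PT x y t ≠ 0 →
      (fun p : Strat Y Xh A × Y => pYT PX PW PT p.2 p.1) (t, y) ≠ 0 := by
    intro x y t h
    have hpos : 0 < pYTgivenX PW PT x y t :=
      lt_of_le_of_ne (pYTgivenX_nonneg PW PT hPWnn hPTnn x y t) (Ne.symm h)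
    have hxyt : 0 < pXYT PX PW PT x y t := by
      rw [pXYT_eq PX PW PT x y t]; exact mul_pos (hPXpos x) hpos
    exact (lt_of_lt_of_le hxyt (le_pYT PX PW PT hPXnn hPWnn hPTnn x y t)).ne'
  rw [Ffun_eq_coe_Fr PX PW dist cost s m PT _ _ hg1 hg2,
    Fr_opt_eq_Jfun PX PW dist cost s m PT hPXnn hPW hPT]

end Core

end RDCAux

/-- For any `s ≤ 0` and `m ≤ 0`, the triple minimization of `F` over
`P_{T|X}`, `Q_{T,Y}` and `Q_A` equals the minimization over `P_{T|X}` alone of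
`I(X;a(T)) + I(X;T|Y,a(T)) − s E[d(X,T(Y))] − m E[Δ(a(T))]`, and
`R(D_{s,m}, C_{s,m}) = s D_{s,m} + m C_{s,m} + min F`. -/
theorem RDC_as_triple_minimization_of_F
    {X Y A Xh : Type} [Fintype X] [Fintype Y] [Fintype A] [Fintype Xh]
    [DecidableEq X] [DecidableEq Y] [DecidableEq A] [DecidableEq Xh]
    [Nonempty X] [Nonempty Y] [Nonempty A] [Nonempty Xh]
    (PX : X → ℝ) (PW : A → X → Y → ℝ) (dist : X → Xh → ℝ) (cost : A → ℝ)
    (hPX : IsPMF PX) (hPXpos : ∀ x, 0 < PX x)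
    (hPW : ∀ a x, IsPMF (PW a x))
    (hdist : ∀ x xh, 0 ≤ dist x xh) (hdist0 : ∀ x, ∃ xh, dist x xh = 0)
    (hcost : ∀ a, 0 ≤ cost a) (hcost0 : ∃ a, cost a = 0)
    (s m : ℝ) (hs : s ≤ 0) (hm : m ≤ 0)
    (Pstar : X → Strat Y Xh A → ℝ) (hPstar : IsCondPMF Pstar)
    (hPstarMin : ∃ QTY : Strat Y Xh A × Y → ℝ, ∃ QA : A → ℝ,
      IsPMF QTY ∧ IsPMF QA ∧
      ∀ (PT' : X → Strat Y Xh A → ℝ) (QTY' : Strat Y Xh A × Y → ℝ) (QA' : A → ℝ),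
        IsCondPMF PT' → IsPMF QTY' → IsPMF QA' →
          Ffun PX PW dist cost s m Pstar QTY QA ≤
            Ffun PX PW dist cost s m PT' QTY' QA') :
    sInf { v : EReal | ∃ PT : X → Strat Y Xh A → ℝ, ∃ QTY : Strat Y Xh A × Y → ℝ,
        ∃ QA : A → ℝ, IsCondPMF PT ∧ IsPMF QTY ∧ IsPMF QA ∧
        v = Ffun PX PW dist cost s m PT QTY QA } =
      ((Jmin PX PW dist cost s m : ℝ) : EReal) ∧
    ((RDC PX PW dist cost (expDist PX PW dist Pstar) (expCost PX cost Pstar) : ℝ) : EReal)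
      = ((s * expDist PX PW dist Pstar + m * expCost PX cost Pstar : ℝ) : EReal)
        + sInf { v : EReal | ∃ PT : X → Strat Y Xh A → ℝ,
            ∃ QTY : Strat Y Xh A × Y → ℝ, ∃ QA : A → ℝ,
            IsCondPMF PT ∧ IsPMF QTY ∧ IsPMF QA ∧
            v = Ffun PX PW dist cost s m PT QTY QA } := by
  classical
  obtain ⟨QTY0, QA0, hQTY0, hQA0, hmin⟩ := hPstarMin
  -- upper bound for the minimal F value
  have hub : ∀ PT : X → Strat Y Xh A → ℝ, IsCondPMF PT →
      Ffun PX PW dist cost s m Pstar QTY0 QA0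
        ≤ ((Jfun PX PW dist cost s m PT : ℝ) : EReal) := by
    intro PT hPT
    have h := hmin PT (fun p => pYT PX PW PT p.2 p.1) (pA PX PT) hPT
      (RDCAux.pYTopt_pmf PX PW PT hPX hPW hPT) (RDCAux.pA_pmf PX PT hPX hPT)
    rwa [RDCAux.Ffun_opt_eq PX PW dist cost s m PT hPX hPXpos hPW hPT] at h
  have hlb : ((Jfun PX PW dist cost s m Pstar : ℝ) : EReal)
      ≤ Ffun PX PW dist cost s m Pstar QTY0 QA0 :=
    RDCAux.Jfun_le_Ffun PX PW dist cost s m Pstar hPX hPXpos hPW hPstar QTY0 QA0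
      hQTY0 hQA0
  have hFstar : Ffun PX PW dist cost s m Pstar QTY0 QA0
      = ((Jfun PX PW dist cost s m Pstar : ℝ) : EReal) :=
    le_antisymm (hub Pstar hPstar) hlb
  have hJlb : ∀ PT : X → Strat Y Xh A → ℝ, IsCondPMF PT →
      Jfun PX PW dist cost s m Pstar ≤ Jfun PX PW dist cost s m PT := by
    intro PT hPT
    have h := hub PT hPT
    rw [hFstar] at h
    exact EReal.coe_le_coe_iff.mp h
  have hJmin : Jmin PX PW dist cost s m = Jfun PX PW dist cost s m Pstar := by
    unfold Jmin
    apply le_antisymm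
    · exact csInf_le ⟨Jfun PX PW dist cost s m Pstar, by
        rintro r ⟨PT, hPT, rfl⟩; exact hJlb PT hPT⟩ ⟨Pstar, hPstar, rfl⟩
    · exact le_csInf ⟨_, ⟨Pstar, hPstar, rfl⟩⟩ (by
        rintro r ⟨PT, hPT, rfl⟩; exact hJlb PT hPT)
  have hsInf : sInf { v : EReal | ∃ PT : X → Strat Y Xh A → ℝ,
        ∃ QTY : Strat Y Xh A × Y → ℝ, ∃ QA : A → ℝ,
        IsCondPMF PT ∧ IsPMF QTY ∧ IsPMF QA ∧
        v = Ffun PX PW dist cost s m PT QTY QA }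
      = ((Jmin PX PW dist cost s m : ℝ) : EReal) := by
    apply le_antisymm
    · rw [hJmin, ← hFstar]
      exact sInf_le ⟨Pstar, QTY0, QA0, hPstar, hQTY0, hQA0, rfl⟩
    · refine le_sInf ?_
      rintro v ⟨PT, QTY, QA, hPT, hQTY, hQA, rfl⟩
      rw [hJmin, ← hFstar]
      exact hmin PT QTY QA hPT hQTY hQA
  refine ⟨hsInf, ?_⟩
  rw [hsInf, ← EReal.coe_add, EReal.coe_eq_coe_iff, hJmin]
  have hRDC : RDC PX PW dist cost (expDist PX PW dist Pstar) (expCost PX cost Pstar)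
      = IXA PX Pstar + IXTcondYA PX PW Pstar := by
    unfold RDC
    have hmem : IXA PX Pstar + IXTcondYA PX PW Pstar ∈
        { r : ℝ | ∃ PT : X → Strat Y Xh A → ℝ, IsCondPMF PT ∧
          expDist PX PW dist PT ≤ expDist PX PW dist Pstar ∧
          expCost PX cost PT ≤ expCost PX cost Pstar ∧
          r = IXA PX PT + IXTcondYA PX PW PT } :=
      ⟨Pstar, hPstar, le_refl _, le_refl _, rfl⟩
    have hlbr : ∀ r ∈ { r : ℝ | ∃ PT : X → Strat Y Xh A → ℝ, IsCondPMF PT ∧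
          expDist PX PW dist PT ≤ expDist PX PW dist Pstar ∧
          expCost PX cost PT ≤ expCost PX cost Pstar ∧
          r = IXA PX PT + IXTcondYA PX PW PT },
        IXA PX Pstar + IXTcondYA PX PW Pstar ≤ r := by
      rintro r ⟨PT, hPT, hD, hC, rfl⟩
      have h1 := hJlb PT hPT
      have h2 : s * expDist PX PW dist Pstar ≤ s * expDist PX PW dist PT :=
        mul_le_mul_of_nonpos_left hD hs
      have h3 : m * expCost PX cost Pstar ≤ m * expCost PX cost PT :=
        mul_le_mul_of_nonpos_left hC hm
      unfold Jfun at h1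
      linarith
    exact le_antisymm (csInf_le ⟨_, hlbr⟩ hmem) (le_csInf ⟨_, hmem⟩ hlbr)
  rw [hRDC]
  unfold Jfun
  ring
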